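/- Let m ≥ 2 be an integer and let p, q be positive integers with q > 0, and set r = p - q. Suppose that p(p+1)⋯(p+m-1) = r(r+1)⋯(r+m-1). Then m is even and q = 2p + m - 1. -/

import Mathlib

lemma rising_prod_lt (m : ℕ) (hm : 0 < m) (a b : ℤ) (ha : 0 < a) (hab : a < b) :
    ∏ i ∈ Finset.range m, (a + i) < ∏ i ∈ Finset.range m, (b + i) := by
  apply Finset.prod_lt_prod_of_nonempty
  · intro i _; positivity
  · intro i _; linarith
  · exact Finset.nonempty_range_iff.mpr hm.ne'

theorem rising_factorial_eq_forces_even (m p q : ℕ) (hm : 2 ≤ m) (hp : 0 < p) (hq : 0 < q)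
    (h : ∏ i ∈ Finset.range m, ((p : ℤ) + i) = ∏ i ∈ Finset.range m, ((p : ℤ) - q + i)) :
    Even m ∧ (q : ℤ) = 2 * p + m - 1 := by
  have hm0 : 0 < m := by omega
  set r : ℤ := (p : ℤ) - q with hr
  have hL : 0 < ∏ i ∈ Finset.range m, ((p : ℤ) + i) :=
    Finset.prod_pos (fun i _ => by positivity)
  -- rule out r ≥ 0
  have hrneg : r < 0 := by
    by_contra hr0
    push_neg at hr0
    rcases LE.le.eq_or_lt hr0 with he | hpos
    · have : ∏ i ∈ Finset.range m, (r + i) = 0 := by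
        apply Finset.prod_eq_zero (Finset.mem_range.mpr hm0)
        rw [← he]; simp
      rw [h, this] at hL; exact lt_irrefl 0 hL
    · have hlt : r < (p : ℤ) := by
        have : (0:ℤ) < q := by exact_mod_cast hq
        omega
      have := rising_prod_lt m hm0 r p hpos hlt
      rw [h] at hL; linarith [h]
  -- rule out r + m - 1 ≥ 0 (a zero factor)
  have hrm : r + m - 1 < 0 := by
    by_contra hge
    push_neg at hge
    have hj : (-r).toNat < m := by omega
    have : ∏ i ∈ Finset.range m, (r + i) = 0 := by
      apply Finset.prod_eq_zero (Finset.mem_range.mpr hj)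
      have : ((-r).toNat : ℤ) = -r := by omega
      rw [this]; ring
    rw [h, this] at hL; exact lt_irrefl 0 hL
  set s : ℤ := -(r + m - 1) with hs
  have hspos : 0 < s := by omega
  -- reflect the product
  have hrefl : ∏ i ∈ Finset.range m, (r + i) = (-1) ^ m * ∏ i ∈ Finset.range m, (s + i) := by
    have h1 : ∏ i ∈ Finset.range m, (r + i) = ∏ i ∈ Finset.range m, (-(s + (m - 1 - i : ℕ))) := by
      apply Finset.prod_congr rfl
      intro i hi
      have hi' : i < m := Finset.mem_range.mp hi
      have : ((m - 1 - i : ℕ) : ℤ) = (m : ℤ) - 1 - i := by omega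
      rw [this]; ring
    rw [h1]
    have h2 : ∏ i ∈ Finset.range m, (-(s + ((m - 1 - i : ℕ) : ℤ)))
        = ∏ i ∈ Finset.range m, ((-1) * (s + ((m - 1 - i : ℕ) : ℤ))) :=
      Finset.prod_congr rfl fun i _ => (neg_one_mul _).symm
    rw [h2, Finset.prod_mul_distrib, Finset.prod_const, Finset.card_range]
    congr 1
    exact Finset.prod_range_reflect (fun i => s + i) m
  rw [hrefl] at h
  rw [h] at hL
  have hR : 0 < ∏ i ∈ Finset.range m, (s + i) :=
    Finset.prod_pos (fun i _ => by positivity)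
  have heven : Even m := by
    by_contra hodd
    rw [Nat.not_even_iff_odd] at hodd
    rw [hodd.neg_one_pow] at hL
    linarith
  refine ⟨heven, ?_⟩
  rw [heven.neg_one_pow, one_mul] at h
  -- now ∏ (p+i) = ∏ (s+i), so p = s
  have hps : (p : ℤ) = s := by
    by_contra hne
    rcases lt_or_gt_of_ne hne with hlt | hgt
    · have := rising_prod_lt m hm0 (p : ℤ) s (by positivity) hlt
      linarith [h, this]
    · have := rising_prod_lt m hm0 s (p : ℤ) hspos hgt
      linarith [h, this]
  omega
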